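/- arXiv:2008.02221 — 2 statements merged into one kernel-verified Lean document; each statement's English description precedes it below -/
import Mathlib

section
/- (Lemma 6.10(2) of the paper) For every f ∈ F̃' and every g ∈ F̃: f∘g − π(f∘g) = g∘f − π(g∘f) = g − π(g), where ∘ denotes composition modulo I^k. -/
/-- Truncation modulo `I^k`: the sum of the homogeneous components of degree `< k`
(`I` being the ideal of polynomials with zero constant term). -/
noncomputable def truncLT {A : Type*} [CommRing A] {σ : Type*} (k : ℕ)
    (p : MvPolynomial σ A) : MvPolynomial σ A :=
  ∑ d ∈ Finset.range k, MvPolynomial.homogeneousComponent d p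

section AuxLemmas

variable {A : Type*} [CommRing A] {σ : Type*}

/-- All monomials of `p` have degree `≥ m`. -/
def MinDeg (m : ℕ) (p : MvPolynomial σ A) : Prop :=
  ∀ s : σ →₀ ℕ, s.degree < m → MvPolynomial.coeff s p = 0

lemma Finsupp.degree_add' (a b : σ →₀ ℕ) : (a + b).degree = a.degree + b.degree := by
  simp [Finsupp.degree_eq_weight_one, map_add]

lemma MinDeg.mono {m m' : ℕ} {p : MvPolynomial σ A} (h : MinDeg m p) (hle : m' ≤ m) :
    MinDeg m' p := fun s hs => h s (lt_of_lt_of_le hs hle)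

lemma MinDeg.zero (m : ℕ) : MinDeg m (0 : MvPolynomial σ A) := fun _ _ => rfl

lemma MinDeg.add {m : ℕ} {p q : MvPolynomial σ A} (hp : MinDeg m p) (hq : MinDeg m q) :
    MinDeg m (p + q) := fun s hs => by simp [MvPolynomial.coeff_add, hp s hs, hq s hs]

lemma MinDeg.mul {m n : ℕ} {p q : MvPolynomial σ A} (hp : MinDeg m p) (hq : MinDeg n q) :
    MinDeg (m + n) (p * q) := by
  classical
  intro s hs
  rw [MvPolynomial.coeff_mul]
  refine Finset.sum_eq_zero fun x hx => ?_
  rw [Finset.HasAntidiagonal.mem_antidiagonal] at hx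
  have hdeg : x.1.degree + x.2.degree < m + n := by
    rw [← Finsupp.degree_add', hx]; exact hs
  rcases lt_or_ge x.1.degree m with h1 | h1
  · rw [hp x.1 h1, zero_mul]
  · rw [hq x.2 (by omega), mul_zero]

lemma MinDeg.pow {m : ℕ} {p : MvPolynomial σ A} (hp : MinDeg m p) (e : ℕ) :
    MinDeg (e * m) (p ^ e) := by
  induction e with
  | zero => intro s hs; omega
  | succ e ih =>
    have := ih.mul hp
    rw [pow_succ, Nat.succ_mul]
    exact this

lemma MinDeg.sum {m : ℕ} {ι : Type*} (t : Finset ι) (p : ι → MvPolynomial σ A)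
    (h : ∀ i ∈ t, MinDeg m (p i)) : MinDeg m (∑ i ∈ t, p i) := by
  classical
  induction t using Finset.induction_on with
  | empty => simpa using MinDeg.zero m
  | insert _ _ hnot ih =>
    rw [Finset.sum_insert hnot]
    exact (h _ (Finset.mem_insert_self _ _)).add
      (ih fun i hi => h i (Finset.mem_insert_of_mem hi))

lemma MinDeg.C_mul {m : ℕ} {p : MvPolynomial σ A} (a : A) (hp : MinDeg m p) :
    MinDeg m (MvPolynomial.C a * p) := by
  have h0 : MinDeg 0 (MvPolynomial.C a : MvPolynomial σ A) := fun s hs => by omega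
  simpa using h0.mul hp

lemma minDeg_X (j : σ) : MinDeg 1 (MvPolynomial.X j : MvPolynomial σ A) := by
  classical
  intro s hs
  rw [MvPolynomial.coeff_X' (R := A) j s]
  split_ifs with h
  · subst h
    simp [Finsupp.degree_single] at hs
  · rfl

lemma minDeg_homogeneousComponent (n : ℕ) (p : MvPolynomial σ A) :
    MinDeg n (MvPolynomial.homogeneousComponent n p) := by
  intro s hs
  rw [MvPolynomial.coeff_homogeneousComponent]
  rw [if_neg (by omega)]

/-- substituting polys with zero constant term into a poly of min degree m keeps min degree m -/
lemma minDeg_bind₁ {m : ℕ} {p : MvPolynomial σ A} (hp : MinDeg m p)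
    (g : σ → MvPolynomial σ A) (hg : ∀ j, MinDeg 1 (g j)) :
    MinDeg m (MvPolynomial.bind₁ g p) := by
  classical
  rw [p.as_sum, map_sum]
  refine MinDeg.sum _ _ fun s hs => ?_
  rw [MvPolynomial.bind₁_monomial]
  refine MinDeg.C_mul _ ?_
  have hsd : m ≤ s.degree := by
    by_contra h
    exact MvPolynomial.mem_support_iff.mp hs (hp s (by omega))
  refine MinDeg.mono ?_ hsd
  have : MinDeg (∑ j ∈ s.support, s j * 1) (∏ j ∈ s.support, g j ^ s j) := by
    induction s.support using Finset.induction_on with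
    | empty => intro t ht; simp at ht
    | insert _ _ hnot ih =>
      rw [Finset.prod_insert hnot, Finset.sum_insert hnot]
      exact ((hg _).pow _).mul ih
  simpa [Finsupp.degree_apply] using this

lemma MinDeg.prodD {ι : Type*} (t : Finset ι) (d : ι → ℕ) (p : ι → MvPolynomial σ A)
    (h : ∀ i ∈ t, MinDeg (d i) (p i)) : MinDeg (∑ i ∈ t, d i) (∏ i ∈ t, p i) := by
  classical
  induction t using Finset.induction_on with
  | empty => intro s hs; simp at hs
  | @insert j t hnot ih =>
    rw [Finset.prod_insert hnot, Finset.sum_insert hnot]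
    exact (h _ (Finset.mem_insert_self _ _)).mul
      (ih fun i hi => h i (Finset.mem_insert_of_mem hi))

lemma minDeg_one_of_constantCoeff {p : MvPolynomial σ A}
    (h : MvPolynomial.coeff 0 p = 0) : MinDeg 1 p := by
  intro s hs
  have hs0 : s = 0 := (Finsupp.degree_eq_zero_iff s).mp (by omega)
  rwa [hs0]

lemma minDeg_pow_sub_pow {k : ℕ} (hk : 2 ≤ k) (j : σ) {P : MvPolynomial σ A}
    (hP : MinDeg (k - 1) P) (e : ℕ) :
    MinDeg (e - 1 + (k - 1)) ((MvPolynomial.X j + P) ^ e - MvPolynomial.X j ^ e) := by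
  induction e with
  | zero => simpa using MinDeg.zero _
  | succ e ih =>
    have hXP : MinDeg 1 (MvPolynomial.X j + P) :=
      (minDeg_X j).add (hP.mono (by omega))
    have key : (MvPolynomial.X j + P) ^ (e + 1) - MvPolynomial.X j ^ (e + 1) =
        (MvPolynomial.X j + P) * ((MvPolynomial.X j + P) ^ e - MvPolynomial.X j ^ e)
          + P * MvPolynomial.X j ^ e := by ring
    rw [key]
    have t1 := hXP.mul ih
    have t2 := hP.mul ((minDeg_X (A := A) j).pow e)
    exact (t1.mono (by omega)).add (t2.mono (by omega))

lemma minDeg_case2 {k : ℕ} (hk : 2 ≤ k) (f : σ → MvPolynomial σ A)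
    (hf : ∀ j, f j = MvPolynomial.X j + MvPolynomial.homogeneousComponent (k - 1) (f j))
    (G : MvPolynomial σ A) (hG : MvPolynomial.coeff 0 G = 0) :
    MinDeg (k - 1) (MvPolynomial.bind₁ f G - G) := by
  classical
  have hsum : MvPolynomial.bind₁ f G - G =
      ∑ s ∈ G.support, (MvPolynomial.bind₁ f (MvPolynomial.monomial s (MvPolynomial.coeff s G))
        - MvPolynomial.monomial s (MvPolynomial.coeff s G)) := by
    rw [Finset.sum_sub_distrib, ← map_sum, ← G.as_sum]
  rw [hsum]
  refine MinDeg.sum _ _ fun s hs => ?_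
  rw [MvPolynomial.bind₁_monomial, MvPolynomial.monomial_eq, ← mul_sub]
  have hprodX : (s.prod fun j e => (MvPolynomial.X j : MvPolynomial σ A) ^ e) =
      ∏ j ∈ s.support, MvPolynomial.X j ^ s j := rfl
  rw [hprodX]
  refine MinDeg.C_mul _ ?_
  -- the difference of products
  have hdeg1 : 1 ≤ s.degree := by
    rcases Nat.eq_zero_or_pos s.degree with h0 | h1
    · exfalso
      have : s = 0 := (Finsupp.degree_eq_zero_iff s).mp h0
      subst this
      exact MvPolynomial.mem_support_iff.mp hs hG
    · exact h1
  -- prove MinDeg (s.degree + (k - 2)) of the difference by induction on s.support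
  have main : ∀ t : Finset σ, MinDeg (∑ j ∈ t, s j + (k - 2))
      ((∏ j ∈ t, f j ^ s j) - ∏ j ∈ t, MvPolynomial.X j ^ s j) := by
    intro t
    induction t using Finset.induction_on with
    | empty => simpa using MinDeg.zero _
    | @insert j t hnot ih =>
      have hfj : MinDeg 1 (f j) := by
        rw [hf j]
        exact (minDeg_X j).add ((minDeg_homogeneousComponent _ _).mono (by omega))
      have key : (∏ i ∈ insert j t, f i ^ s i) - ∏ i ∈ insert j t, MvPolynomial.X i ^ s i
          = f j ^ s j * ((∏ i ∈ t, f i ^ s i) - ∏ i ∈ t, MvPolynomial.X i ^ s i)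
            + ((f j) ^ s j - MvPolynomial.X j ^ s j) * ∏ i ∈ t, MvPolynomial.X i ^ s i := by
        rw [Finset.prod_insert hnot, Finset.prod_insert hnot]; ring
      rw [key, Finset.sum_insert hnot]
      have t1 := (hfj.pow (s j)).mul ih
      have hsub : MinDeg (s j - 1 + (k - 1)) ((f j) ^ s j - MvPolynomial.X j ^ s j) := by
        rw [hf j]
        exact minDeg_pow_sub_pow hk j (minDeg_homogeneousComponent _ _) (s j)
      have hXt : MinDeg (∑ i ∈ t, s i) (∏ i ∈ t, (MvPolynomial.X i : MvPolynomial σ A) ^ s i) := by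
        have := MinDeg.prodD t (fun i => s i * 1)
          (fun i => (MvPolynomial.X i : MvPolynomial σ A) ^ s i)
          (fun i _ => (minDeg_X i).pow (s i))
        simpa using this
      have t2 := hsub.mul hXt
      exact (t1.mono (by omega)).add (t2.mono (by omega))
  have := main s.support
  have hdegeq : ∑ j ∈ s.support, s j = s.degree := rfl
  rw [hdegeq] at this
  exact this.mono (by omega)

lemma key_trunc {k : ℕ} (hk : 2 ≤ k) (q gi : MvPolynomial σ A)
    (hdiff : MinDeg (k - 1) (q - gi)) (hdeg : gi.totalDegree ≤ k - 1) :
    truncLT k q - MvPolynomial.homogeneousComponent (k - 1) (truncLT k q)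
      = gi - MvPolynomial.homogeneousComponent (k - 1) gi := by
  obtain ⟨m, rfl⟩ : ∃ m, k = m + 1 := ⟨k - 1, by omega⟩
  simp only [Nat.add_sub_cancel] at hdiff hdeg ⊢
  have hcomp : ∀ d < m, MvPolynomial.homogeneousComponent d q
      = MvPolynomial.homogeneousComponent d gi := by
    intro d hd
    have h0 : MvPolynomial.homogeneousComponent d (q - gi) = 0 := by
      apply MvPolynomial.ext
      intro s
      rw [MvPolynomial.coeff_homogeneousComponent]
      split_ifs with h
      · rw [hdiff s (by omega)]; simp
      · simp
    have := map_sub (MvPolynomial.homogeneousComponent d) q gi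
    rw [h0] at this
    exact sub_eq_zero.mp this.symm
  have gsum : ∑ d ∈ Finset.range (m + 1), MvPolynomial.homogeneousComponent d gi = gi := by
    have hsub : Finset.range (gi.totalDegree + 1) ⊆ Finset.range (m + 1) := by
      intro x hx
      simp only [Finset.mem_range] at *
      omega
    conv_rhs => rw [← MvPolynomial.sum_homogeneousComponent gi]
    refine (Finset.sum_subset hsub fun x _ hnx => ?_).symm
    apply MvPolynomial.homogeneousComponent_eq_zero
    simp only [Finset.mem_range] at hnx
    omega
  have hpi : MvPolynomial.homogeneousComponent m (truncLT (m + 1) q)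
      = MvPolynomial.homogeneousComponent m q := by
    simp only [truncLT, map_sum]
    rw [Finset.sum_eq_single m]
    · rw [MvPolynomial.homogeneousComponent_of_mem (MvPolynomial.homogeneousComponent_mem _ _),
        if_pos rfl]
    · intro d _ hne
      rw [MvPolynomial.homogeneousComponent_of_mem (MvPolynomial.homogeneousComponent_mem _ _),
        if_neg fun h => hne h.symm]
    · intro h
      exact absurd (Finset.mem_range.mpr (Nat.lt_succ_self m)) h
  have e1 : truncLT (m + 1) q
      = ∑ d ∈ Finset.range m, MvPolynomial.homogeneousComponent d q
        + MvPolynomial.homogeneousComponent m q := by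
    simp only [truncLT]
    rw [Finset.sum_range_succ]
  have e2 : gi - MvPolynomial.homogeneousComponent m gi
      = ∑ d ∈ Finset.range m, MvPolynomial.homogeneousComponent d gi := by
    nth_rewrite 1 [← gsum]
    rw [Finset.sum_range_succ, add_sub_cancel_right]
  rw [hpi, e1, add_sub_cancel_right, e2]
  exact Finset.sum_congr rfl fun d hd => hcomp d (Finset.mem_range.mp hd)


end AuxLemmas

/-- Composition of tuples of polynomials modulo `I^k`: substitute the tuple `g`
for the variables in `f`, then delete all monomials of total degree `≥ k`. -/
noncomputable def polyComp {A : Type*} [CommRing A] {σ : Type*} (k : ℕ)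
    (f g : σ → MvPolynomial σ A) : σ → MvPolynomial σ A :=
  fun i => truncLT k (MvPolynomial.bind₁ g (f i))

/-- `f ∈ F̃`: each component has zero constant term and total degree `≤ k − 1`. -/
def memFtilde {A : Type*} [CommRing A] {σ : Type*} (k : ℕ)
    (f : σ → MvPolynomial σ A) : Prop :=
  ∀ i, MvPolynomial.coeff 0 (f i) = 0 ∧ (f i).totalDegree ≤ k - 1

/-- `χ(f)`: the tuple of degree-1 homogeneous components. -/
noncomputable def chiLin {A : Type*} [CommRing A] {σ : Type*}
    (f : σ → MvPolynomial σ A) : σ → MvPolynomial σ A :=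
  fun i => MvPolynomial.homogeneousComponent 1 (f i)

/-- `π(f)`: the tuple of degree-(k−1) homogeneous components. -/
noncomputable def piTop {A : Type*} [CommRing A] {σ : Type*} (k : ℕ)
    (f : σ → MvPolynomial σ A) : σ → MvPolynomial σ A :=
  fun i => MvPolynomial.homogeneousComponent (k - 1) (f i)

/-- `f ∈ F̃'`: `f ∈ F̃` and `f(u) = u + π(f)(u)`. -/
def memFtilde' {A : Type*} [CommRing A] {σ : Type*} (k : ℕ)
    (f : σ → MvPolynomial σ A) : Prop :=
  memFtilde k f ∧ ∀ i, f i - MvPolynomial.homogeneousComponent (k - 1) (f i) =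
    MvPolynomial.X i

/-- **Lemma 6.10(2) of the paper.** For `f ∈ F̃'` and `g ∈ F̃` (tuples of
polynomials in `n−1` variables, `n ≥ 2`, `k ≥ 2`):
`f∘g − π(f∘g) = g∘f − π(g∘f) = g − π(g)`, where `∘` is composition modulo `I^k`. -/
theorem lemma_6_10_2 (A : Type*) [CommRing A] (n k : ℕ) (hn : 2 ≤ n) (hk : 2 ≤ k)
    (f g : Fin (n - 1) → MvPolynomial (Fin (n - 1)) A)
    (hf : memFtilde' k f) (hg : memFtilde k g) :
    (∀ i, polyComp k f g i - piTop k (polyComp k f g) i = g i - piTop k g i)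
    ∧ (∀ i, polyComp k g f i - piTop k (polyComp k g f) i = g i - piTop k g i) := by
  have hfX : ∀ j, f j = MvPolynomial.X j
      + MvPolynomial.homogeneousComponent (k - 1) (f j) := fun j => by
    rw [← hf.2 j]; ring
  constructor
  · intro i
    simp only [polyComp, piTop]
    apply key_trunc hk
    · have heq : MvPolynomial.bind₁ g (f i) - g i
          = MvPolynomial.bind₁ g (MvPolynomial.homogeneousComponent (k - 1) (f i)) := by
        conv_lhs => rw [hfX i]
        rw [map_add, MvPolynomial.bind₁_X_right]
        ring
      rw [heq]
      exact minDeg_bind₁ (minDeg_homogeneousComponent _ _) g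
        (fun j => minDeg_one_of_constantCoeff (hg j).1)
    · exact (hg i).2
  · intro i
    simp only [polyComp, piTop]
    apply key_trunc hk
    · exact minDeg_case2 hk f hfX (g i) (hg i).1
    · exact (hg i).2
end

section
/- (Lemma 6.10(3) of the paper) Let f ∈ F̃' and let g, h ∈ F̃ satisfy h∘g = (u_1,…,u_{n−1}) (the identity tuple, composition taken modulo I^k). Then π(h∘f∘g) = χ(h)∘π(f)∘χ(g) — the tuple obtained by substituting the linear tuple χ(g) into π(f) and then substituting the result into the linear tuple χ(h) — and moreover h∘f∘g ∈ F̃'. -/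
namespace L6103
open MvPolynomial Finset


variable {A : Type*} [CommRing A] {σ : Type*}

lemma degree_add (d e : σ →₀ ℕ) : (d + e).degree = d.degree + e.degree := by
  simp only [Finsupp.degree_eq_weight_one, map_add]

lemma degree_single (j : σ) (n : ℕ) : (Finsupp.single j n).degree = n := by
  simp only [Finsupp.degree_eq_weight_one]
  simp [Finsupp.weight_apply, Finsupp.sum_single_index]

/-- all monomials of `p` have total degree `≥ m` -/
def Low (m : ℕ) (p : MvPolynomial σ A) : Prop :=
  ∀ d : σ →₀ ℕ, d.degree < m → MvPolynomial.coeff d p = 0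

lemma Low_zero (m : ℕ) : Low m (0 : MvPolynomial σ A) := by
  intro d _; simp

lemma Low_any (p : MvPolynomial σ A) : Low 0 p := by
  intro d hd; omega

lemma Low_mono {m m' : ℕ} (h : m' ≤ m) {p : MvPolynomial σ A} (hp : Low m p) : Low m' p :=
  fun d hd => hp d (lt_of_lt_of_le hd h)

lemma Low_add {m : ℕ} {p q : MvPolynomial σ A} (hp : Low m p) (hq : Low m q) : Low m (p + q) := by
  intro d hd; rw [coeff_add, hp d hd, hq d hd, add_zero]

lemma Low_neg {m : ℕ} {p : MvPolynomial σ A} (hp : Low m p) : Low m (-p) := by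
  intro d hd; rw [coeff_neg, hp d hd, neg_zero]

lemma Low_sub {m : ℕ} {p q : MvPolynomial σ A} (hp : Low m p) (hq : Low m q) : Low m (p - q) := by
  rw [sub_eq_add_neg]; exact Low_add hp (Low_neg hq)

lemma Low_sum {m : ℕ} {ι : Type*} {s : Finset ι} {f : ι → MvPolynomial σ A}
    (h : ∀ i ∈ s, Low m (f i)) : Low m (∑ i ∈ s, f i) := by
  intro d hd
  rw [coeff_sum]
  exact Finset.sum_eq_zero fun i hi => h i hi d hd

lemma Low_mul {m m' : ℕ} {p q : MvPolynomial σ A} (hp : Low m p) (hq : Low m' q) :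
    Low (m + m') (p * q) := by
  classical
  intro d hd
  rw [coeff_mul]
  apply Finset.sum_eq_zero
  intro x hx
  rw [Finset.HasAntidiagonal.mem_antidiagonal] at hx
  have hdeg : x.1.degree + x.2.degree = d.degree := by rw [← degree_add, hx]
  rcases Nat.lt_or_ge x.1.degree m with h1 | h1
  · rw [hp x.1 h1, zero_mul]
  · rw [hq x.2 (by omega), mul_zero]

lemma Low_C_mul {m : ℕ} (c : A) {p : MvPolynomial σ A} (hp : Low m p) : Low m (C c * p) := by
  have := Low_mul (Low_any (C c : MvPolynomial σ A)) hp
  rwa [zero_add] at this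

lemma Low_pow {m : ℕ} {p : MvPolynomial σ A} (hp : Low m p) (n : ℕ) : Low (n * m) (p ^ n) := by
  induction n with
  | zero => simpa using Low_any (1 : MvPolynomial σ A)
  | succ n ih =>
      have := Low_mul ih hp
      rw [pow_succ, show (n + 1) * m = n * m + m by ring]
      exact this

lemma Low_prod {ι : Type*} {s : Finset ι} {u : ι → MvPolynomial σ A} {m : ι → ℕ}
    (h : ∀ i ∈ s, Low (m i) (u i)) : Low (∑ i ∈ s, m i) (∏ i ∈ s, u i) := by
  classical
  induction s using Finset.induction_on with
  | empty => simpa using Low_any (1 : MvPolynomial σ A)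
  | @insert a s' hx ih =>
      rw [Finset.sum_insert hx, Finset.prod_insert hx]
      exact Low_mul (h a (Finset.mem_insert_self a s'))
        (ih fun i hi => h i (Finset.mem_insert_of_mem hi))

lemma degree_ge_of_mem_support {m : ℕ} {p : MvPolynomial σ A} (hp : Low m p) {d : σ →₀ ℕ}
    (hd : d ∈ p.support) : m ≤ d.degree := by
  by_contra hc
  exact (MvPolynomial.mem_support_iff.mp hd) (hp d (by omega))

lemma Low_bind {t m : ℕ} {g : σ → MvPolynomial σ A} (hg : ∀ j, Low t (g j))
    {p : MvPolynomial σ A} (hp : Low m p) : Low (t * m) (bind₁ g p) := by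
  rw [show bind₁ g p = ∑ d ∈ p.support, bind₁ g (monomial d (coeff d p)) by
    rw [← map_sum, ← p.as_sum]]
  apply Low_sum
  intro d hd
  rw [bind₁_monomial]
  apply Low_mono (m' := t * m) (m := t * d.degree)
  · exact Nat.mul_le_mul_left t (degree_ge_of_mem_support hp hd)
  apply Low_C_mul
  have := Low_prod (s := d.support) (u := fun j => g j ^ d j) (m := fun j => d j * t)
    (fun j _ => Low_pow (hg j) (d j))
  rwa [show ∑ j ∈ d.support, d j * t = t * d.degree by
    rw [Finsupp.degree_apply, Finset.mul_sum]; exact Finset.sum_congr rfl fun j _ => Nat.mul_comm _ _]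
    at this



lemma coeff_truncLT (k : ℕ) (p : MvPolynomial σ A) (d : σ →₀ ℕ) :
    coeff d (truncLT k p) = if d.degree < k then coeff d p else 0 := by
  unfold truncLT
  rw [coeff_sum]
  simp_rw [coeff_homogeneousComponent]
  rw [Finset.sum_ite_eq (Finset.range k) d.degree (fun _ => coeff d p)]
  simp [Finset.mem_range]

lemma truncLT_add (k : ℕ) (p q : MvPolynomial σ A) :
    truncLT k (p + q) = truncLT k p + truncLT k q := by
  ext d
  simp only [coeff_truncLT, coeff_add]
  split <;> simp

lemma truncLT_eq_zero {k : ℕ} {p : MvPolynomial σ A} (h : Low k p) : truncLT k p = 0 := by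
  ext d
  rw [coeff_truncLT]
  split
  · next hd => simp [h d hd]
  · simp

lemma truncLT_eq_self {k : ℕ} {p : MvPolynomial σ A} (h : p.totalDegree < k) :
    truncLT k p = p := by
  ext d
  rw [coeff_truncLT]
  split
  · rfl
  · next hd =>
      push_neg at hd
      exact (coeff_eq_zero_of_totalDegree_lt (lt_of_lt_of_le h hd)).symm

lemma homogeneousComponent_monomial (n : ℕ) (d : σ →₀ ℕ) (c : A) :
    homogeneousComponent n (monomial d c) =
      if d.degree = n then monomial d c else 0 := by
  classical
  ext e
  rw [coeff_homogeneousComponent]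
  by_cases hd : d.degree = n
  · rw [if_pos hd]
    by_cases he : e.degree = n
    · rw [if_pos he]
    · rw [if_neg he, coeff_monomial, if_neg (fun h => he (by rw [← h]; exact hd))]
  · rw [if_neg hd, coeff_zero]
    by_cases he : e.degree = n
    · rw [if_pos he, coeff_monomial, if_neg (fun h => hd (by rw [h]; exact he))]
    · rw [if_neg he]

lemma Low_homogeneousComponent (n : ℕ) (p : MvPolynomial σ A) :
    Low n (homogeneousComponent n p) := by
  intro d hd
  rw [coeff_homogeneousComponent, if_neg (by omega)]

lemma homogeneousComponent_eq_self {m : ℕ} {p : MvPolynomial σ A} (h1 : Low m p)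
    (h2 : p.totalDegree ≤ m) : homogeneousComponent m p = p := by
  ext d
  rw [coeff_homogeneousComponent]
  rcases lt_trichotomy d.degree m with hd | hd | hd
  · rw [if_neg (by omega), h1 d hd]
  · rw [if_pos hd]
  · rw [if_neg (by omega)]
    symm
    apply coeff_eq_zero_of_totalDegree_lt
    show p.totalDegree < ∑ i ∈ d.support, d i
    have hdd : (∑ i ∈ d.support, d i) = d.degree := rfl
    omega

lemma homogeneousComponent_X {m : ℕ} (hm : m ≠ 1) (i : σ) :
    homogeneousComponent m (X i : MvPolynomial σ A) = 0 := by
  have : (X i : MvPolynomial σ A) = monomial (Finsupp.single i 1) 1 := rfl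
  rw [this, homogeneousComponent_monomial, if_neg]
  rw [degree_single]
  omega

lemma degree_eq_one {d : σ →₀ ℕ} (h : d.degree = 1) : ∃ j, d = Finsupp.single j 1 := by
  classical
  have hne : d ≠ 0 := by
    intro h0
    rw [h0, map_zero] at h
    omega
  obtain ⟨j, hj⟩ := Finsupp.support_nonempty_iff.mpr hne
  have hj1 : d j ≠ 0 := Finsupp.mem_support_iff.mp hj
  have hdj : d j ≤ d.degree := Finsupp.le_degree j d
  refine ⟨j, ?_⟩
  ext x
  by_cases hx : x = j
  · subst hx
    rw [Finsupp.single_eq_same]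
    omega
  · rw [Finsupp.single_eq_of_ne' (Ne.symm hx)]
    by_contra hxx
    have hxs : x ∈ d.support := Finsupp.mem_support_iff.mpr hxx
    have hsub : ({j, x} : Finset σ) ⊆ d.support := by
      intro y hy
      rcases Finset.mem_insert.mp hy with h1 | h1
      · exact h1 ▸ hj
      · exact (Finset.mem_singleton.mp h1) ▸ hxs
    have : d j + d x ≤ d.degree := by
      rw [Finsupp.degree_apply]
      calc d j + d x = ∑ y ∈ ({j, x} : Finset σ), d y := by
            rw [Finset.sum_pair (Ne.symm hx)]
        _ ≤ ∑ y ∈ d.support, d y := Finset.sum_le_sum_of_subset hsub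
    omega


lemma Low_finsupp_prod {u : σ → MvPolynomial σ A} (hu : ∀ j, Low 1 (u j)) (d : σ →₀ ℕ) :
    Low d.degree (∏ j ∈ d.support, u j ^ d j) := by
  have := Low_prod (s := d.support) (u := fun j => u j ^ d j) (m := fun j => d j * 1)
    (fun j _ => Low_pow (hu j) (d j))
  simpa [Finsupp.degree_apply] using this

lemma pow_sub_low {a : ℕ} {x y : MvPolynomial σ A} (hx : Low 1 x) (hy : Low 1 y)
    (hxy : Low a (x - y)) : ∀ n, 1 ≤ n → Low (n - 1 + a) (x ^ n - y ^ n) := by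
  intro n
  induction n with
  | zero => omega
  | succ n ih =>
      intro _
      by_cases hn : n = 0
      · subst hn; simpa using hxy
      · have hn1 : 1 ≤ n := Nat.one_le_iff_ne_zero.mpr hn
        have hid : x ^ (n + 1) - y ^ (n + 1) = x * (x ^ n - y ^ n) + (x - y) * y ^ n := by
          ring
        rw [hid]
        apply Low_add
        · exact Low_mono (by omega) (Low_mul hx (ih hn1))
        · exact Low_mono (by omega) (Low_mul hxy (Low_pow hy n))

lemma prod_sub_low {a : ℕ} {u v : σ → MvPolynomial σ A}
    (hu : ∀ j, Low 1 (u j)) (hv : ∀ j, Low 1 (v j)) (huv : ∀ j, Low a (u j - v j)) :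
    ∀ d : σ →₀ ℕ, 1 ≤ d.degree →
      Low (d.degree - 1 + a)
        ((∏ j ∈ d.support, u j ^ d j) - ∏ j ∈ d.support, v j ^ d j) := by
  intro d
  induction d using Finsupp.induction with
  | zero => intro hcon; rw [map_zero] at hcon; omega
  | single_add j n d' hj hn ih =>
      intro _
      have hn1 : 1 ≤ n := Nat.one_le_iff_ne_zero.mpr hn
      have hprod : ∀ w : σ → MvPolynomial σ A,
          (∏ i ∈ (Finsupp.single j n + d').support, w i ^ (Finsupp.single j n + d') i)
            = w j ^ n * ∏ i ∈ d'.support, w i ^ d' i := by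
        intro w
        show (Finsupp.single j n + d').prod (fun i e => w i ^ e)
          = w j ^ n * d'.prod (fun i e => w i ^ e)
        rw [Finsupp.prod_add_index' (fun i => pow_zero (w i))
          (fun i e1 e2 => pow_add (w i) e1 e2)]
        exact congrArg (· * d'.prod fun i e => w i ^ e)
          (Finsupp.prod_single_index (pow_zero (w j)))
      rw [hprod, hprod, degree_add, degree_single]
      by_cases hd0 : d' = 0
      · subst hd0
        show Low _ (u j ^ n * (0:σ →₀ ℕ).prod (fun i e => u i ^ e)
          - v j ^ n * (0:σ →₀ ℕ).prod (fun i e => v i ^ e))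
        rw [Finsupp.prod_zero_index, Finsupp.prod_zero_index, mul_one, mul_one,
          map_zero]
        rw [Nat.add_zero]
        exact pow_sub_low (hu j) (hv j) (huv j) n hn1
      · have hd1 : 1 ≤ d'.degree := by
          rcases Nat.eq_zero_or_pos d'.degree with h0 | h0
          · exact absurd ((Finsupp.degree_eq_zero_iff d').mp h0) hd0
          · exact h0
        have hid : u j ^ n * (∏ i ∈ d'.support, u i ^ d' i)
              - v j ^ n * (∏ i ∈ d'.support, v i ^ d' i)
            = u j ^ n * ((∏ i ∈ d'.support, u i ^ d' i) - ∏ i ∈ d'.support, v i ^ d' i)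
              + (u j ^ n - v j ^ n) * ∏ i ∈ d'.support, v i ^ d' i := by
          ring
        rw [hid]
        apply Low_add
        · exact Low_mono (by omega) (Low_mul (Low_pow (hu j) n) (ih hd1))
        · exact Low_mono (by omega)
            (Low_mul (pow_sub_low (hu j) (hv j) (huv j) n hn1) (Low_finsupp_prod hv d'))

lemma bind_expand {a m : ℕ} (ha : 1 ≤ a) {g r : σ → MvPolynomial σ A}
    (hgl : ∀ j, Low 1 (g j)) (hrl : ∀ j, Low a (r j)) {p : MvPolynomial σ A} (hp : Low m p) :
    Low (max m 2 - 1 + a)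
      (bind₁ (fun j => g j + r j) p - bind₁ g p
        - bind₁ r (homogeneousComponent 1 p)) := by
  classical
  have hul : ∀ j, Low 1 (g j + r j) := fun j => Low_add (hgl j) (Low_mono ha (hrl j))
  have huv : ∀ j, Low a ((g j + r j) - g j) := fun j => by simpa using hrl j
  have h1 : bind₁ (fun j => g j + r j) p
      = ∑ d ∈ p.support, bind₁ (fun j => g j + r j) (monomial d (coeff d p)) := by
    rw [← map_sum, ← p.as_sum]
  have h2 : bind₁ g p = ∑ d ∈ p.support, bind₁ g (monomial d (coeff d p)) := by
    rw [← map_sum, ← p.as_sum]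
  have h3 : bind₁ r (homogeneousComponent 1 p)
      = ∑ d ∈ p.support, bind₁ r (homogeneousComponent 1 (monomial d (coeff d p))) := by
    rw [← map_sum, ← map_sum, ← p.as_sum]
  rw [h1, h2, h3, ← Finset.sum_sub_distrib, ← Finset.sum_sub_distrib]
  apply Low_sum
  intro d hd
  have hdm : m ≤ d.degree := degree_ge_of_mem_support hp hd
  by_cases h0 : d.degree = 0
  · have hd0 : d = 0 := (Finsupp.degree_eq_zero_iff d).mp h0
    subst hd0
    rw [homogeneousComponent_monomial, if_neg (by rw [map_zero]; omega),
      map_zero, bind₁_monomial, bind₁_monomial]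
    simp only [Finsupp.support_zero, Finset.prod_empty, mul_one]
    have : (C (coeff 0 p) : MvPolynomial σ A) - C (coeff 0 p) - 0 = 0 := by ring
    rw [this]
    exact Low_zero _
  · by_cases h1deg : d.degree = 1
    · obtain ⟨j, rfl⟩ := degree_eq_one h1deg
      have hsupp : (Finsupp.single j 1).support = {j} :=
        Finsupp.support_single_ne_zero j one_ne_zero
      rw [homogeneousComponent_monomial, if_pos (degree_single j 1),
        bind₁_monomial, bind₁_monomial, bind₁_monomial]
      rw [hsupp]
      simp only [Finset.prod_singleton, Finsupp.single_eq_same, pow_one]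
      have : C (coeff (Finsupp.single j 1) p) * (g j + r j)
            - C (coeff (Finsupp.single j 1) p) * g j
            - C (coeff (Finsupp.single j 1) p) * r j = 0 := by ring
      rw [this]
      exact Low_zero _
    · have h2deg : 2 ≤ d.degree := by omega
      rw [homogeneousComponent_monomial, if_neg (by omega), map_zero, sub_zero,
        bind₁_monomial, bind₁_monomial, ← mul_sub]
      apply Low_mono (m := d.degree - 1 + a) (by omega)
      exact Low_C_mul _ (prod_sub_low hul hgl huv d (by omega))

lemma totalDegree_bind_le {t : ℕ} {g : σ → MvPolynomial σ A} (hg : ∀ j, (g j).totalDegree ≤ t)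
    (p : MvPolynomial σ A) : (bind₁ g p).totalDegree ≤ t * p.totalDegree := by
  rw [show bind₁ g p = ∑ d ∈ p.support, bind₁ g (monomial d (coeff d p)) by
    rw [← map_sum, ← p.as_sum]]
  apply (totalDegree_finset_sum _ _).trans
  apply Finset.sup_le
  intro d hd
  rw [bind₁_monomial]
  apply (totalDegree_mul _ _).trans
  have hC : (C (coeff d p) : MvPolynomial σ A).totalDegree = 0 := totalDegree_C _
  have hprod : (∏ i ∈ d.support, g i ^ d i).totalDegree ≤ t * p.totalDegree := by
    apply (totalDegree_finset_prod _ _).trans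
    calc ∑ i ∈ d.support, (g i ^ d i).totalDegree
        ≤ ∑ i ∈ d.support, d i * t := by
          apply Finset.sum_le_sum
          intro i _
          exact (totalDegree_pow _ _).trans (Nat.mul_le_mul_left (d i) (hg i))
      _ = d.degree * t := by rw [Finsupp.degree_apply, Finset.sum_mul]
      _ ≤ p.totalDegree * t := Nat.mul_le_mul_right t (le_totalDegree hd)
      _ = t * p.totalDegree := Nat.mul_comm _ _
  omega


lemma Low_one_of_coeff_zero {p : MvPolynomial σ A} (h : MvPolynomial.coeff 0 p = 0) :
    Low 1 p := by
  intro d hd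
  have hd0 : d = 0 := (Finsupp.degree_eq_zero_iff d).mp (by omega)
  subst hd0; exact h


end L6103

open MvPolynomial L6103 in
/-- **Lemma 6.10(3) of the paper.** Let `f ∈ F̃'` and let `g, h ∈ F̃` satisfy
`h∘g = (u_1,…,u_{n−1})` (composition modulo `I^k`).  Then
`π(h∘f∘g) = χ(h)∘π(f)∘χ(g)` (exact substitutions), and `h∘f∘g ∈ F̃'`. -/
theorem lemma_6_10_3 (A : Type*) [CommRing A] (n k : ℕ) (hn : 2 ≤ n) (hk : 2 ≤ k)
    (f g h : Fin (n - 1) → MvPolynomial (Fin (n - 1)) A)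
    (hf : memFtilde' k f) (hg : memFtilde k g) (hh : memFtilde k h)
    (hhg : ∀ i, polyComp k h g i = MvPolynomial.X i) :
    (∀ i, piTop k (polyComp k h (polyComp k f g)) i
        = MvPolynomial.bind₁
            (fun j => MvPolynomial.bind₁ (chiLin g) (piTop k f j)) (chiLin h i))
    ∧ memFtilde' k (polyComp k h (polyComp k f g)) := by
  classical
  obtain ⟨hfF, hfX⟩ := hf
  rcases Nat.lt_or_ge k 3 with hk3 | hk3
  · -- the case k = 2 : the hypotheses force the coefficient ring to be trivial
    have hk2 : k = 2 := by omega
    subst hk2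
    have i0 : Fin (n - 1) := ⟨0, by omega⟩
    have hlow : Low 1 (f i0) := Low_one_of_coeff_zero (hfF i0).1
    have hself : MvPolynomial.homogeneousComponent 1 (f i0) = f i0 :=
      homogeneousComponent_eq_self hlow (by simpa using (hfF i0).2)
    have hX : (MvPolynomial.X i0 : MvPolynomial (Fin (n - 1)) A) = 0 := by
      have h2 := hfX i0
      rw [show (2 : ℕ) - 1 = 1 from rfl, hself, sub_self] at h2
      exact h2.symm
    have h01 : (1 : A) = 0 := by
      have h3 := congrArg (MvPolynomial.coeff (Finsupp.single i0 1)) hX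
      simpa [MvPolynomial.coeff_X] using h3
    have hA : Subsingleton A := subsingleton_of_zero_eq_one h01.symm
    have hs : Subsingleton (MvPolynomial (Fin (n - 1)) A) := Module.subsingleton A _
    refine ⟨fun i => Subsingleton.elim _ _,
      ⟨fun i => ⟨Subsingleton.elim _ _, ?_⟩, fun i => Subsingleton.elim _ _⟩⟩
    rw [Subsingleton.elim (polyComp 2 h (polyComp 2 f g) i) 0]
    simp
  · -- main case: k ≥ 3
    have hk1 : 1 ≤ k - 1 := by omega
    -- notation
    set G : Fin (n - 1) → MvPolynomial (Fin (n - 1)) A := chiLin g with hGdef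
    set H : Fin (n - 1) → MvPolynomial (Fin (n - 1)) A := chiLin h with hHdef
    set P : Fin (n - 1) → MvPolynomial (Fin (n - 1)) A := piTop k f with hPdef
    set B : Fin (n - 1) → MvPolynomial (Fin (n - 1)) A :=
      fun j => MvPolynomial.bind₁ G (P j) with hBdef
    set Q : Fin (n - 1) → MvPolynomial (Fin (n - 1)) A :=
      fun i => MvPolynomial.bind₁ B (H i) with hQdef
    have hfj : ∀ j, f j = MvPolynomial.X j + P j := by
      intro j
      have h1 := hfX j
      rw [sub_eq_iff_eq_add] at h1
      exact h1
    have hPlow : ∀ j, Low (k - 1) (P j) := fun j => Low_homogeneousComponent _ _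
    have hPdeg : ∀ j, (P j).totalDegree ≤ k - 1 := fun j =>
      (MvPolynomial.homogeneousComponent_isHomogeneous (k - 1) (f j)).totalDegree_le
    have hGlow : ∀ j, Low 1 (G j) := fun j => Low_homogeneousComponent _ _
    have hGdeg : ∀ j, (G j).totalDegree ≤ 1 := fun j =>
      (MvPolynomial.homogeneousComponent_isHomogeneous 1 (g j)).totalDegree_le
    have hHlow : ∀ i, Low 1 (H i) := fun i => Low_homogeneousComponent _ _
    have hHdeg : ∀ i, (H i).totalDegree ≤ 1 := fun i =>
      (MvPolynomial.homogeneousComponent_isHomogeneous 1 (h i)).totalDegree_le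
    have hglow : ∀ j, Low 1 (g j) := fun j => Low_one_of_coeff_zero (hg j).1
    have hhlow : ∀ i, Low 1 (h i) := fun i => Low_one_of_coeff_zero (hh i).1
    have hrlow : ∀ j, Low 2 (g j - G j) := by
      intro j d hd
      rw [MvPolynomial.coeff_sub, hGdef]
      show MvPolynomial.coeff d (g j)
        - MvPolynomial.coeff d (MvPolynomial.homogeneousComponent 1 (g j)) = 0
      rw [MvPolynomial.coeff_homogeneousComponent]
      by_cases h1 : d.degree = 1
      · rw [if_pos h1, sub_self]
      · rw [if_neg h1, sub_zero]
        have hd0 : d = 0 := (Finsupp.degree_eq_zero_iff d).mp (by omega)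
        subst hd0
        exact (hg j).1
    have hBlow : ∀ j, Low (k - 1) (B j) := by
      intro j
      have h1 := Low_bind hGlow (hPlow j)
      rwa [one_mul] at h1
    have hBdeg : ∀ j, (B j).totalDegree ≤ k - 1 := by
      intro j
      have h1 := totalDegree_bind_le hGdeg (P j)
      rw [one_mul] at h1
      exact h1.trans (hPdeg j)
    have hQlow : ∀ i, Low (k - 1) (Q i) := by
      intro i
      have h1 := Low_bind hBlow (hHlow i)
      rwa [mul_one] at h1
    have hQdeg : ∀ i, (Q i).totalDegree ≤ k - 1 := by
      intro i
      have h1 := totalDegree_bind_le hBdeg (H i)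
      calc (Q i).totalDegree ≤ (k - 1) * (H i).totalDegree := h1
        _ ≤ (k - 1) * 1 := Nat.mul_le_mul_left _ (hHdeg i)
        _ = k - 1 := Nat.mul_one _
    -- Step 1: (f ∘ g) j = g j + B j
    have step1 : ∀ j, polyComp k f g j = g j + B j := by
      intro j
      show truncLT k (MvPolynomial.bind₁ g (f j)) = g j + B j
      rw [hfj j, map_add, MvPolynomial.bind₁_X_right, truncLT_add]
      have hPlin : MvPolynomial.homogeneousComponent 1 (P j) = 0 := by
        rw [hPdef]
        show MvPolynomial.homogeneousComponent 1
          (MvPolynomial.homogeneousComponent (k - 1) (f j)) = 0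
        rw [MvPolynomial.homogeneousComponent_of_mem
          (MvPolynomial.homogeneousComponent_mem (k - 1) (f j)), if_neg (by omega)]
      have hexp := bind_expand (a := 2) (m := k - 1) (by omega) hGlow hrlow (hPlow j)
      rw [show max (k - 1) 2 - 1 + 2 = k by omega] at hexp
      rw [show (fun i => G i + (g i - G i)) = g from funext fun i => by ring] at hexp
      rw [hPlin, map_zero, sub_zero] at hexp
      have hsplit : MvPolynomial.bind₁ g (P j)
          = B j + (MvPolynomial.bind₁ g (P j) - MvPolynomial.bind₁ G (P j)) := by
        rw [hBdef]; ring
      rw [hsplit, truncLT_add, truncLT_eq_zero hexp, add_zero,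
        truncLT_eq_self (lt_of_le_of_lt (hg j).2 (by omega)),
        truncLT_eq_self (lt_of_le_of_lt (hBdeg j) (by omega))]
    -- Step 2: (h ∘ f ∘ g) i = X i + Q i
    have key : ∀ i, polyComp k h (polyComp k f g) i = MvPolynomial.X i + Q i := by
      intro i
      show truncLT k (MvPolynomial.bind₁ (polyComp k f g) (h i)) = MvPolynomial.X i + Q i
      rw [show polyComp k f g = fun j => g j + B j from funext step1]
      have hexp2 := bind_expand (a := k - 1) (m := 1) (by omega) hglow hBlow (hhlow i)
      rw [show max 1 2 - 1 + (k - 1) = k by omega] at hexp2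
      have hsplit : MvPolynomial.bind₁ (fun j => g j + B j) (h i)
          = MvPolynomial.bind₁ g (h i)
            + MvPolynomial.bind₁ B (MvPolynomial.homogeneousComponent 1 (h i))
            + (MvPolynomial.bind₁ (fun j => g j + B j) (h i)
              - MvPolynomial.bind₁ g (h i)
              - MvPolynomial.bind₁ B (MvPolynomial.homogeneousComponent 1 (h i))) := by
        ring
      rw [hsplit, truncLT_add, truncLT_add, truncLT_eq_zero hexp2, add_zero]
      rw [show truncLT k (MvPolynomial.bind₁ g (h i)) = MvPolynomial.X i from hhg i]
      rw [show truncLT k (MvPolynomial.bind₁ B (MvPolynomial.homogeneousComponent 1 (h i)))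
          = Q i from truncLT_eq_self (lt_of_le_of_lt (hQdeg i) (by omega))]
    -- the homogeneous component of degree k-1
    have hpi : ∀ i, MvPolynomial.homogeneousComponent (k - 1)
        (polyComp k h (polyComp k f g) i) = Q i := by
      intro i
      rw [key i, map_add, homogeneousComponent_X (m := k - 1) (by omega) i,
        homogeneousComponent_eq_self (hQlow i) (hQdeg i), zero_add]
    refine ⟨fun i => hpi i, ⟨fun i => ⟨?_, ?_⟩, fun i => ?_⟩⟩
    · rw [key i, MvPolynomial.coeff_add, MvPolynomial.coeff_zero_X,
        hQlow i 0 (by rw [map_zero]; omega), add_zero]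
    · rw [key i]
      apply (MvPolynomial.totalDegree_add _ _).trans
      have hXdeg : (MvPolynomial.X i : MvPolynomial (Fin (n - 1)) A).totalDegree ≤ 1 := by
        have h1 := MvPolynomial.totalDegree_monomial_le (Finsupp.single i 1) (1 : A)
        apply le_trans _ _
        · exact (Finsupp.single i 1).sum fun _ e => e
        · exact h1
        · simp [Finsupp.sum_single_index]
      exact max_le (hXdeg.trans (by omega)) (hQdeg i)
    · rw [show MvPolynomial.homogeneousComponent (k - 1)
          (polyComp k h (polyComp k f g) i) = Q i from hpi i, key i, add_sub_cancel_right]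
end
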